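/- Let $P = \{f_1 \partial_1 + f_2 \partial_2 : f_1, f_2 \in \mathbf{k}[x_1^{\pm}, x_2^{\pm}]\}$ with binary operation $(x_1^{i_1} x_2^{i_2} \partial_s) \cdot (x_1^{j_1} x_2^{j_2} \partial_t) = \delta_{s,1} x_1^{i_1+j_1+1} x_2^{i_2+j_2} \partial_t + \delta_{s,2} x_1^{i_1+j_1} x_2^{i_2+j_2+1} \partial_t$. Then $(P, \cdot)$ is a perm algebra, i.e., $p \cdot (q \cdot r) = (p \cdot q) \cdot r = (q \cdot p) \cdot r$ for all $p, q, r \in P$. -/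

import Mathlib

/-- The operation
`(x₁^{i₁}x₂^{i₂}∂ₛ)·(x₁^{j₁}x₂^{j₂}∂ₜ) = δ_{s,1} x₁^{i₁+j₁+1}x₂^{i₂+j₂}∂ₜ + δ_{s,2} x₁^{i₁+j₁}x₂^{i₂+j₂+1}∂ₜ`
on the free Laurent-polynomial module `P = {f₁∂₁ + f₂∂₂}` is a perm algebra. Here `P` is
modeled as the free `k`-module on basis `(i₁, i₂, s) ↔ x₁^{i₁}x₂^{i₂}∂ₛ`. -/
theorem stmt1 {k : Type*} [Field k] [CharZero k]
    (mul : ((ℤ × ℤ × Fin 2) →₀ k) →ₗ[k] ((ℤ × ℤ × Fin 2) →₀ k) →ₗ[k] ((ℤ × ℤ × Fin 2) →₀ k))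
    (hmul : ∀ (i₁ i₂ j₁ j₂ : ℤ) (s t : Fin 2),
      mul (Finsupp.single (i₁, i₂, s) 1) (Finsupp.single (j₁, j₂, t) 1) =
        if s = 0 then Finsupp.single (i₁ + j₁ + 1, i₂ + j₂, t) 1
        else Finsupp.single (i₁ + j₁, i₂ + j₂ + 1, t) 1) :
    ∀ p q r, mul p (mul q r) = mul (mul p q) r ∧ mul (mul p q) r = mul (mul q p) r := by
  have key : ∀ (a b c : ℤ × ℤ × Fin 2),
      mul (Finsupp.single a (1:k)) (mul (Finsupp.single b 1) (Finsupp.single c 1)) =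
        mul (mul (Finsupp.single a 1) (Finsupp.single b 1)) (Finsupp.single c 1) ∧
      mul (mul (Finsupp.single a (1:k)) (Finsupp.single b 1)) (Finsupp.single c 1) =
        mul (mul (Finsupp.single b 1) (Finsupp.single a 1)) (Finsupp.single c 1) := by
    rintro ⟨i₁, i₂, s⟩ ⟨j₁, j₂, t⟩ ⟨l₁, l₂, u⟩
    fin_cases s <;> fin_cases t <;>
      simp only [Fin.mk_zero, Fin.mk_one, hmul, if_true, if_false, one_ne_zero, ite_true,
        ite_false, Fin.isValue, reduceIte] <;>
      refine ⟨?_, ?_⟩ <;> ring_nf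
  have hsingle : ∀ (a : ℤ × ℤ × Fin 2) (c : k),
      Finsupp.single a c = c • Finsupp.single a (1:k) := by
    intro a c; simp [Finsupp.smul_single]
  intro p q r
  constructor
  · induction p using Finsupp.induction_linear with
    | zero => simp
    | add f g hf hg => simp [map_add, hf, hg]
    | single a ca =>
      induction q using Finsupp.induction_linear with
      | zero => simp
      | add f g hf hg => simp [map_add, hf, hg]
      | single b cb =>
        induction r using Finsupp.induction_linear with
        | zero => simp
        | add f g hf hg => simp [map_add, hf, hg]
        | single c cc =>
          rw [hsingle a ca, hsingle b cb, hsingle c cc]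
          simp only [map_smul, LinearMap.smul_apply]
          rw [(key a b c).1]
  · induction p using Finsupp.induction_linear with
    | zero => simp
    | add f g hf hg => simp [map_add, hf, hg]
    | single a ca =>
      induction q using Finsupp.induction_linear with
      | zero => simp
      | add f g hf hg => simp [map_add, hf, hg]
      | single b cb =>
        induction r using Finsupp.induction_linear with
        | zero => simp
        | add f g hf hg => simp [map_add, hf, hg]
        | single c cc =>
          rw [hsingle a ca, hsingle b cb, hsingle c cc]
          simp only [map_smul, LinearMap.smul_apply]
          rw [(key a b c).2, smul_comm ca cb]
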